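/- The point P = (-81, 4374) on the elliptic curve y² = x³ − 98415x + 11691702 has order exactly 6, and its multiples are 2P = (243, −1458), 3P = (162, 0), 4P = (243, 1458), 5P = (−81, −4374). -/

import Mathlib

open WeierstrassCurve

/-- The elliptic curve C₅₄ : y² = x³ - 98415x + 11691702. -/
noncomputable def C54 : Affine ℚ :=
  { a₁ := 0, a₂ := 0, a₃ := 0, a₄ := -98415, a₆ := 11691702 }

lemma some_congr {W : Affine ℚ} {x₁ y₁ x₂ y₂ : ℚ} (h₁ : W.Nonsingular x₁ y₁)
    (hx : x₁ = x₂) (hy : y₁ = y₂) (h₂ : W.Nonsingular x₂ y₂) :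
    Affine.Point.some _ _ h₁ = Affine.Point.some _ _ h₂ := by subst hx hy; rfl

lemma c54a₁ : C54.a₁ = 0 := rfl
lemma c54a₂ : C54.a₂ = 0 := rfl
lemma c54a₃ : C54.a₃ = 0 := rfl
lemma c54a₄ : C54.a₄ = -98415 := rfl

lemma c54_ns {x y : ℚ} (he : y ^ 2 = x ^ 3 - 98415 * x + 11691702)
    (hns : ¬(3 * x ^ 2 = 98415 ∧ y = 0)) : C54.Nonsingular x y := by
  rw [show C54 = { a₁ := 0, a₂ := 0, a₃ := 0, a₄ := -98415, a₆ := 11691702 } from rfl,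
    Affine.nonsingular_iff, Affine.equation_iff]
  push_neg at hns
  constructor
  · simp only; linarith
  · simp only
    rcases eq_or_ne y 0 with hy | hy
    · left; intro h; exact hns (by linarith) hy
    · right; intro h; exact hy (by linarith)

/-- P = (-81, 4374) has order exactly 6 with multiples as listed. -/
theorem stmt9 :
    ∃ (hP : C54.Nonsingular (-81) 4374) (h2 : C54.Nonsingular 243 (-1458))
      (h3 : C54.Nonsingular 162 0) (h4 : C54.Nonsingular 243 1458)
      (h5 : C54.Nonsingular (-81) (-4374)),
      addOrderOf (Affine.Point.some _ _ hP) = 6 ∧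
      (2 : ℕ) • Affine.Point.some _ _ hP = Affine.Point.some _ _ h2 ∧
      (3 : ℕ) • Affine.Point.some _ _ hP = Affine.Point.some _ _ h3 ∧
      (4 : ℕ) • Affine.Point.some _ _ hP = Affine.Point.some _ _ h4 ∧
      (5 : ℕ) • Affine.Point.some _ _ hP = Affine.Point.some _ _ h5 := by
  have hP : C54.Nonsingular (-81) 4374 := c54_ns (by norm_num) (by norm_num)
  have h2 : C54.Nonsingular 243 (-1458) := c54_ns (by norm_num) (by norm_num)
  have h3 : C54.Nonsingular 162 0 := c54_ns (by norm_num) (by norm_num)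
  have h4 : C54.Nonsingular 243 1458 := c54_ns (by norm_num) (by norm_num)
  have h5 : C54.Nonsingular (-81) (-4374) := c54_ns (by norm_num) (by norm_num)
  set P : C54.Point := Affine.Point.some _ _ hP with hPdef
  -- 2P
  have hne : (4374 : ℚ) ≠ C54.negY (-81) 4374 := by
    simp [Affine.negY, c54a₁, c54a₃]; norm_num
  have hs2 : C54.slope (-81) (-81) 4374 4374 = -9 := by
    rw [Affine.slope_of_Y_ne rfl hne]
    simp [c54a₁, c54a₂, c54a₃, c54a₄]; norm_num
  have e2 : P + P = Affine.Point.some _ _ h2 := by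
    rw [hPdef, Affine.Point.add_self_of_Y_ne hne]
    exact some_congr _ (by rw [Affine.addX, hs2]; simp [c54a₁, c54a₂]; norm_num)
      (by rw [Affine.addY, Affine.negAddY, Affine.addX, hs2]
          simp [Affine.negY, c54a₁, c54a₂, c54a₃]; norm_num) _
  -- 3P = 2P + P
  have hx3 : (243 : ℚ) ≠ -81 := by norm_num
  have hs3 : C54.slope 243 (-81) (-1458) 4374 = -18 := by
    rw [Affine.slope_of_X_ne hx3]; norm_num
  have e3 : Affine.Point.some _ _ h2 + P = Affine.Point.some _ _ h3 := by
    rw [hPdef, Affine.Point.add_of_X_ne hx3]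
    exact some_congr _ (by rw [Affine.addX, hs3]; simp [c54a₁, c54a₂]; norm_num)
      (by rw [Affine.addY, Affine.negAddY, Affine.addX, hs3]
          simp [Affine.negY, c54a₁, c54a₂, c54a₃]; norm_num) _
  -- 4P = 3P + P
  have hx4 : (162 : ℚ) ≠ -81 := by norm_num
  have hs4 : C54.slope 162 (-81) 0 4374 = -18 := by
    rw [Affine.slope_of_X_ne hx4]; norm_num
  have e4 : Affine.Point.some _ _ h3 + P = Affine.Point.some _ _ h4 := by
    rw [hPdef, Affine.Point.add_of_X_ne hx4]
    exact some_congr _ (by rw [Affine.addX, hs4]; simp [c54a₁, c54a₂]; norm_num)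
      (by rw [Affine.addY, Affine.negAddY, Affine.addX, hs4]
          simp [Affine.negY, c54a₁, c54a₂, c54a₃]; norm_num) _
  -- 5P = 4P + P
  have hx5 : (243 : ℚ) ≠ -81 := by norm_num
  have hs5 : C54.slope 243 (-81) 1458 4374 = -9 := by
    rw [Affine.slope_of_X_ne hx5]; norm_num
  have e5 : Affine.Point.some _ _ h4 + P = Affine.Point.some _ _ h5 := by
    rw [hPdef, Affine.Point.add_of_X_ne hx5]
    exact some_congr _ (by rw [Affine.addX, hs5]; simp [c54a₁, c54a₂]; norm_num)
      (by rw [Affine.addY, Affine.negAddY, Affine.addX, hs5]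
          simp [Affine.negY, c54a₁, c54a₂, c54a₃]; norm_num) _
  -- 6P = 5P + P = 0
  have e6 : Affine.Point.some _ _ h5 + P = 0 := by
    rw [hPdef]
    exact Affine.Point.add_of_Y_eq rfl (by simp [Affine.negY, c54a₁, c54a₃])
  have n2 : (2 : ℕ) • P = Affine.Point.some _ _ h2 := by rw [two_nsmul, e2]
  have n3 : (3 : ℕ) • P = Affine.Point.some _ _ h3 := by
    rw [show (3 : ℕ) = 2 + 1 from rfl, succ_nsmul, n2, e3]
  have n4 : (4 : ℕ) • P = Affine.Point.some _ _ h4 := by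
    rw [show (4 : ℕ) = 3 + 1 from rfl, succ_nsmul, n3, e4]
  have n5 : (5 : ℕ) • P = Affine.Point.some _ _ h5 := by
    rw [show (5 : ℕ) = 4 + 1 from rfl, succ_nsmul, n4, e5]
  have n6 : (6 : ℕ) • P = 0 := by
    rw [show (6 : ℕ) = 5 + 1 from rfl, succ_nsmul, n5, e6]
  refine ⟨hP, h2, h3, h4, h5, ?_, n2, n3, n4, n5⟩
  rw [addOrderOf_eq_iff (by norm_num)]
  refine ⟨n6, ?_⟩
  intro m hm hm'
  interval_cases m
  · rw [one_nsmul]; exact Affine.Point.some_ne_zero hP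
  · rw [n2]; exact Affine.Point.some_ne_zero h2
  · rw [n3]; exact Affine.Point.some_ne_zero h3
  · rw [n4]; exact Affine.Point.some_ne_zero h4
  · rw [n5]; exact Affine.Point.some_ne_zero h5
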